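/- For every l with 0 ≤ l ≤ M−1, Tr(ρ · O_l) = c_l/α², where O_l = (H_l ⊗ X)/2 and X is the Pauli-X matrix; furthermore Tr(ρ · O_α) = 1/α², where O_α = I ⊗ |1⟩⟨1|. -/

import Mathlib

open Matrix Kronecker

/-- for the resource state
`ρ = (1/(d·α²))·(H² ⊗ |0⟩⟨0| + H ⊗ |0⟩⟨1| + H ⊗ |1⟩⟨0| + I ⊗ |1⟩⟨1|)`,
`Tr(ρ · (H_l ⊗ X)/2) = c_l/α²` for every `l`, and `Tr(ρ · (I ⊗ |1⟩⟨1|)) = 1/α²`. -/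
theorem resourceState_decoding (d M : ℕ) (hd : 0 < d) (hM : 0 < M)
    (Hm : Fin M → Matrix (Fin d) (Fin d) ℂ)
    (hherm : ∀ m, (Hm m).IsHermitian)
    (hunit : ∀ m, Hm m ∈ Matrix.unitaryGroup (Fin d) ℂ)
    (hortho : ∀ j k, (Hm j * Hm k).trace / (d : ℂ) = if j = k then 1 else 0)
    (c : Fin M → ℝ)
    (H : Matrix (Fin d) (Fin d) ℂ) (hH : H = ∑ m, (c m : ℂ) • Hm m)
    (α : ℝ) (hα : α = Real.sqrt (∑ m, c m ^ 2 + 1))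
    (ρ : Matrix (Fin d × Fin 2) (Fin d × Fin 2) ℂ)
    (hρ : ρ = ((d : ℂ) * (α : ℂ) ^ 2)⁻¹ •
      ((H * H) ⊗ₖ Matrix.single (0 : Fin 2) (0 : Fin 2) (1 : ℂ)
        + H ⊗ₖ Matrix.single (0 : Fin 2) (1 : Fin 2) (1 : ℂ)
        + H ⊗ₖ Matrix.single (1 : Fin 2) (0 : Fin 2) (1 : ℂ)
        + (1 : Matrix (Fin d) (Fin d) ℂ)
            ⊗ₖ Matrix.single (1 : Fin 2) (1 : Fin 2) (1 : ℂ))) :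
    (∀ l : Fin M,
      (ρ * ((2 : ℂ)⁻¹ • (Hm l ⊗ₖ
          (Matrix.single (0 : Fin 2) (1 : Fin 2) (1 : ℂ)
            + Matrix.single (1 : Fin 2) (0 : Fin 2) (1 : ℂ))))).trace
        = (c l : ℂ) / (α : ℂ) ^ 2)
    ∧ (ρ * ((1 : Matrix (Fin d) (Fin d) ℂ)
          ⊗ₖ Matrix.single (1 : Fin 2) (1 : Fin 2) (1 : ℂ))).trace
        = 1 / (α : ℂ) ^ 2 := by
  have hd' : (d : ℂ) ≠ 0 := Nat.cast_ne_zero.mpr hd.ne'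
  have hs : (0:ℝ) ≤ ∑ m, c m ^ 2 + 1 := by positivity
  have hα2 : (α : ℂ) ^ 2 = (∑ m, (c m : ℂ) ^ 2) + 1 := by
    have : (α:ℝ)^2 = ∑ m, c m ^ 2 + 1 := by rw [hα]; exact Real.sq_sqrt hs
    push_cast [← this]
    norm_cast
  have hα2pos : (0:ℝ) < α ^ 2 := by
    have : (α:ℝ)^2 = ∑ m, c m ^ 2 + 1 := by rw [hα]; exact Real.sq_sqrt hs
    rw [this]; positivity
  have hαne : (α : ℂ) ^ 2 ≠ 0 := by
    have : ((α:ℝ)^2 : ℂ) ≠ 0 := by exact_mod_cast hα2pos.ne'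
    push_cast at this; exact this
  have htr : ∀ j k, (Hm j * Hm k).trace = if j = k then (d:ℂ) else 0 := by
    intro j k
    have := hortho j k
    rw [div_eq_iff hd'] at this
    rw [this]
    split <;> simp
  have hHl : ∀ l, (H * Hm l).trace = (c l : ℂ) * d := by
    intro l
    rw [hH, Finset.sum_mul, Matrix.trace_sum]
    simp only [Matrix.smul_mul, Matrix.trace_smul, htr, smul_eq_mul, mul_ite, mul_zero]
    rw [Finset.sum_ite_eq' Finset.univ l fun m => (c m : ℂ) * d]
    simp
  have tE : ∀ (i j : Fin 2), (Matrix.single i j (1:ℂ)).trace = if i = j then 1 else 0 := by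
    intro i j
    fin_cases i <;> fin_cases j <;>
      simp [Matrix.trace, Matrix.diag, Matrix.single, Fin.sum_univ_two] <;> decide
  have tEE : ∀ (i j k l : Fin 2),
      (Matrix.single i j (1:ℂ) * Matrix.single k l (1:ℂ)).trace
        = if j = k ∧ l = i then 1 else 0 := by
    intro i j k l
    fin_cases i <;> fin_cases j <;> fin_cases k <;> fin_cases l <;>
      simp [Matrix.trace, Matrix.diag, Matrix.single, Matrix.mul_apply,
        Fin.sum_univ_two] <;> decide
  constructor
  · intro l
    rw [hρ, Matrix.smul_mul, Matrix.mul_smul, Matrix.trace_smul, Matrix.trace_smul]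
    simp only [Matrix.kronecker_add, add_mul, mul_add, ← Matrix.mul_kronecker_mul,
      Matrix.trace_add, Matrix.trace_kronecker, Matrix.one_mul, Matrix.mul_one, tEE]
    norm_num
    rw [hHl]
    field_simp
    ring
  · rw [hρ, Matrix.smul_mul, Matrix.trace_smul]
    simp only [add_mul, ← Matrix.mul_kronecker_mul, Matrix.trace_add,
      Matrix.trace_kronecker, Matrix.one_mul, Matrix.mul_one, tEE]
    norm_num [Matrix.trace_one]
    field_simp
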